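/- Let f : ℂ → ℂ be given for |ζ| > R by the convergent series f(ζ) = Σ_{l=0}^∞ f_l/ζ^{l+1}, and let n ∈ ℕ. If (P_n, Q_n) is a pair of polynomials with P_n ≠ 0, deg P_n ≤ n, deg Q_n ≤ n−1, such that P_n(ζ)f(ζ) − Q_n(ζ) = O(1/ζ^{n+1}) as |ζ| → ∞, and if the Hankel determinant H_n = det[(f_{i+j})_{0≤i,j≤n−1}] is nonzero, then deg P_n = n. -/

import Mathlib

lemma summable_geom_bound (d : ℕ → ℂ) (M r : ℝ) (hd : ∀ l, ‖d l‖ ≤ M * r ^ l)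
    (z : ℝ) (hz : 0 ≤ z) (hr : 0 ≤ r) (hzr : r * z < 1) :
    Summable (fun l => d l * (z:ℂ) ^ l) := by
  apply Summable.of_norm_bounded (g := fun l => M * (r*z) ^ l)
  · exact (summable_geometric_of_lt_one (by positivity) hzr).mul_left M
  · intro l
    rw [norm_mul, norm_pow, Complex.norm_real, Real.norm_eq_abs, _root_.abs_of_nonneg hz, mul_pow]
    calc ‖d l‖ * z ^ l ≤ (M * r ^ l) * z ^ l :=
          mul_le_mul_of_nonneg_right (hd l) (by positivity)
      _ = M * (r^l * z^l) := by ring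

lemma summable_geom_bound' (g : ℕ → ℂ) (M r : ℝ)
    (hg : ∀ l, ‖g l‖ ≤ M * r ^ l)
    (z : ℝ) (hz : 0 ≤ z) (hr : 0 ≤ r) (hzr : r * z < 1) :
    Summable (fun l => g l * (z:ℂ) ^ (l+1)) := by
  have hb : ∀ l, ‖g l * z‖ ≤ (M * z) * r ^ l := by
    intro l
    rw [norm_mul, Complex.norm_real, Real.norm_eq_abs, _root_.abs_of_nonneg hz]
    calc ‖g l‖ * z ≤ (M * r ^ l) * z :=
          mul_le_mul_of_nonneg_right (hg l) hz
      _ = (M * z) * r ^ l := by ring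
  exact (summable_geom_bound (fun l => g l * z) (M*z) r hb z hz hr hzr).congr
    (fun l => by rw [pow_succ]; ring)

lemma norm_tsum_geom_le (d : ℕ → ℂ) (M r : ℝ) (hM : 0 ≤ M)
    (hd : ∀ l, ‖d l‖ ≤ M * r ^ l)
    (z : ℝ) (hz : 0 ≤ z) (hr : 0 ≤ r) (hzr : r * z ≤ 1/2) :
    ‖∑' l, d l * (z:ℂ) ^ l‖ ≤ 2 * M := by
  have hzr1 : r * z < 1 := lt_of_le_of_lt hzr (by norm_num)
  have hs := summable_geom_bound d M r hd z hz hr hzr1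
  calc ‖∑' l, d l * (z:ℂ) ^ l‖ ≤ ∑' l, ‖d l * (z:ℂ) ^ l‖ := norm_tsum_le_tsum_norm hs.norm
    _ ≤ ∑' l, M * (r*z)^l := by
        apply Summable.tsum_le_tsum _ hs.norm ((summable_geometric_of_lt_one (by positivity) hzr1).mul_left M)
        intro l
        rw [norm_mul, norm_pow, Complex.norm_real, Real.norm_eq_abs, _root_.abs_of_nonneg hz, mul_pow]
        calc ‖d l‖ * z ^ l ≤ (M * r ^ l) * z ^ l :=
              mul_le_mul_of_nonneg_right (hd l) (by positivity)
          _ = M * (r^l * z^l) := by ring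
    _ = M * (1 - r*z)⁻¹ := by
        rw [tsum_mul_left, tsum_geometric_of_lt_one (by positivity) hzr1]
    _ ≤ 2 * M := by
        have h1 : (1 - r*z)⁻¹ ≤ 2 := by
          rw [inv_le_comm₀ (by linarith) (by norm_num)]
          linarith
        nlinarith

lemma coeffs_eq_zero (d : ℕ → ℂ) (M r : ℝ) (hM : 0 ≤ M) (hr : 0 ≤ r)
    (hd : ∀ l, ‖d l‖ ≤ M * r ^ l) (ε : ℝ) (hε : 0 < ε)
    (h : ∀ z : ℝ, 0 < z → z < ε → ∑' l, d l * (z:ℂ) ^ l = 0) :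
    ∀ m, d m = 0 := by
  intro m
  induction m using Nat.strong_induction_on with
  | _ m ih =>
    -- bound |d m| ≤ z * (2 * (M * r^(m+1))) for z small
    set ε' : ℝ := min ε (1/(2*(r+1))) with hε'def
    have hε' : 0 < ε' := lt_min hε (by positivity)
    have key : ∀ z : ℝ, 0 < z → z < ε' → ‖d m‖ ≤ z * (2 * (M * r^(m+1))) := by
      intro z hz hzε
      have hzε1 : z < ε := lt_of_lt_of_le hzε (min_le_left _ _)
      have hzr : r * z ≤ 1/2 := by
        have : z < 1/(2*(r+1)) := lt_of_lt_of_le hzε (min_le_right _ _)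
        rw [lt_div_iff₀ (by positivity)] at this
        nlinarith
      have hzr1 : r * z < 1 := lt_of_le_of_lt hzr (by norm_num)
      have hs := summable_geom_bound d M r hd z hz.le hr hzr1
      -- ∑' l, d (l+m) * z^(l+m) = ∑' - finite sum = 0
      have h1 : ∑' l, d (l+m) * (z:ℂ) ^ (l+m) = 0 := by
        have := hs.sum_add_tsum_nat_add m
        rw [h z hz hzε1] at this
        have hz0 : ∑ i ∈ Finset.range m, d i * (z:ℂ)^i = 0 := by
          apply Finset.sum_eq_zero
          intro i hi
          rw [ih i (Finset.mem_range.mp hi), zero_mul]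
        linear_combination this - hz0
      have h2 : ∑' l, d (l+m) * (z:ℂ) ^ l = 0 := by
        have hzne : (z:ℂ) ^ m ≠ 0 := pow_ne_zero _ (by exact_mod_cast hz.ne')
        have : ∑' l, d (l+m) * (z:ℂ) ^ (l+m) = (∑' l, d (l+m) * (z:ℂ) ^ l) * (z:ℂ)^m := by
          rw [← tsum_mul_right]
          congr 1; funext l; rw [pow_add]; ring
        rw [h1] at this
        exact (mul_eq_zero.mp this.symm).resolve_right hzne
      -- split head
      have hs2 : Summable (fun l => d (l+m) * (z:ℂ) ^ l) := by
        apply summable_geom_bound (fun l => d (l+m)) (M * r^m) r _ z hz.le hr hzr1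
        intro l
        calc ‖d (l+m)‖ ≤ M * r ^ (l+m) := hd _
          _ = M * r^m * r^l := by rw [pow_add]; ring
      have h3 : d m + ∑' l, d (l+1+m) * (z:ℂ) ^ (l+1) = 0 := by
        have := hs2.tsum_eq_zero_add
        rw [h2] at this
        simp only [zero_add, pow_zero, mul_one] at this
        linear_combination -this
      have h4 : d m = -(z:ℂ) * ∑' l, d (l+1+m) * (z:ℂ) ^ l := by
        have : ∑' l, d (l+1+m) * (z:ℂ) ^ (l+1) = (z:ℂ) * ∑' l, d (l+1+m) * (z:ℂ)^l := by
          rw [← tsum_mul_left]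
          congr 1; funext l; rw [pow_succ]; ring
        rw [this] at h3
        linear_combination h3
      rw [h4, norm_mul, norm_neg, Complex.norm_real, Real.norm_eq_abs, _root_.abs_of_nonneg hz.le]
      apply mul_le_mul_of_nonneg_left _ hz.le
      have := norm_tsum_geom_le (fun l => d (l+1+m)) (M * r^(m+1)) r (by positivity)
        (fun l => by
          calc ‖d (l+1+m)‖ ≤ M * r ^ (l+1+m) := hd _
            _ = M * r^(m+1) * r^l := by rw [pow_add, pow_add]; ring)
        z hz.le hr hzr
      exact this
    -- conclude d m = 0
    by_contra hne
    have habs : 0 < ‖d m‖ := by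
      simpa [norm_pos_iff] using hne
    set K := 2 * (M * r^(m+1)) with hK
    have hK0 : 0 ≤ K := by positivity
    set z := min (ε'/2) (‖d m‖ / (2*K+1)) with hzdef
    have hz0 : 0 < z := lt_min (by linarith) (by positivity)
    have hz1 : z < ε' := lt_of_le_of_lt (min_le_left _ _) (by linarith)
    have := key z hz0 hz1
    have hz2 : z ≤ ‖d m‖ / (2*K+1) := min_le_right _ _
    have : ‖d m‖ ≤ (‖d m‖ / (2*K+1)) * K := by
      calc ‖d m‖ ≤ z * K := this
        _ ≤ (‖d m‖ / (2*K+1)) * K := by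
            apply mul_le_mul_of_nonneg_right hz2 hK0
    rw [div_mul_eq_mul_div, le_div_iff₀ (by positivity)] at this
    nlinarith [mul_nonneg habs.le hK0]

theorem pade_normal_of_hankel_ne_zero
    (R C : ℝ) (hR : 0 < R) (hC : 0 ≤ C)
    (f : ℕ → ℂ) (hf : ∀ l, ‖f l‖ ≤ C * R ^ l)
    (n : ℕ) (P Q : Polynomial ℂ) (hP : P ≠ 0)
    (hdegP : P.natDegree ≤ n) (hdegQ : Q.natDegree ≤ n - 1)
    (c : ℕ → ℂ) (C' R' : ℝ) (hc : ∀ l, ‖c l‖ ≤ C' * R' ^ l)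
    (hAsym : ∀ ζ : ℂ, R < ‖ζ‖ → max R' R < ‖ζ‖ →
      P.eval ζ * (∑' l : ℕ, f l / ζ ^ (l + 1)) - Q.eval ζ = ∑' l : ℕ, c l / ζ ^ (n + l + 1))
    (hHankel : Matrix.det (fun i j : Fin n => f (i.val + j.val)) ≠ 0) :
    P.natDegree = n := by
  classical
  set C'' : ℝ := |C'| with hC''def
  have hC''0 : 0 ≤ C'' := abs_nonneg _
  set r : ℝ := max (max R |R'|) 1 with hrdef
  have hr1 : (1:ℝ) ≤ r := le_max_right _ _
  have hr0 : (0:ℝ) < r := lt_of_lt_of_le one_pos hr1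
  have hRr : R ≤ r := le_trans (le_max_left _ _) (le_max_left _ _)
  have hR'r : |R'| ≤ r := le_trans (le_max_right _ _) (le_max_left _ _)
  have hf' : ∀ l, ‖f l‖ ≤ C * r ^ l := fun l =>
    (hf l).trans (mul_le_mul_of_nonneg_left (pow_le_pow_left₀ hR.le hRr l) hC)
  have hc' : ∀ l, ‖c l‖ ≤ C'' * r ^ l := by
    intro l
    calc ‖c l‖ ≤ C' * R' ^ l := hc l
      _ ≤ |C' * R' ^ l| := le_abs_self _
      _ = C'' * |R'| ^ l := by rw [abs_mul, abs_pow]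
      _ ≤ C'' * r ^ l :=
          mul_le_mul_of_nonneg_left (pow_le_pow_left₀ (abs_nonneg _) hR'r l) hC''0
  -- definitions
  set S : ℕ → ℂ := fun m => ∑ k ∈ Finset.range (n+1), P.coeff k * f (m+k) with hSdef
  set CP : ℝ := ∑ k ∈ Finset.range (n+1), ‖P.coeff k‖ * r ^ k with hCPdef
  have hCP0 : 0 ≤ CP := Finset.sum_nonneg fun k _ => by positivity
  have hS : ∀ m, ‖S m‖ ≤ CP * C * r ^ m := by
    intro m
    calc ‖S m‖ ≤ ∑ k ∈ Finset.range (n+1),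
          ‖P.coeff k * f (m+k)‖ := norm_sum_le _ _
      _ ≤ ∑ k ∈ Finset.range (n+1), ‖P.coeff k‖ * (C * r ^ (m+k)) := by
          apply Finset.sum_le_sum
          intro k _
          rw [norm_mul]
          exact mul_le_mul_of_nonneg_left (hf' _) (norm_nonneg _)
      _ = CP * C * r ^ m := by
          rw [hCPdef, Finset.sum_mul, Finset.sum_mul]
          apply Finset.sum_congr rfl
          intro k _
          rw [pow_add]; ring
  set e : ℕ → ℂ := fun m => S m - (if n ≤ m then c (m-n) else 0) with hedef
  have he : ∀ m, ‖e m‖ ≤ (CP * C + C'') * r ^ m := by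
    intro m
    calc ‖e m‖ ≤ ‖S m‖
          + ‖if n ≤ m then c (m-n) else 0‖ := by
          exact (norm_sub_le _ _)
      _ ≤ CP * C * r ^ m + C'' * r ^ m := by
          apply add_le_add (hS m)
          split_ifs with hnm
          · exact (hc' _).trans
              (mul_le_mul_of_nonneg_left (pow_le_pow_right₀ hr1 (Nat.sub_le m n)) hC''0)
          · rw [norm_zero]; positivity
      _ = (CP * C + C'') * r ^ m := by ring
  set A : Polynomial ℂ := ∑ k ∈ Finset.range (n+1),
      Polynomial.C (P.coeff k) * ∑ i ∈ Finset.range k, Polynomial.C (f i) * Polynomial.X ^ (k-1-i)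
    with hAdef
  set B : Polynomial ℂ := A - Q with hBdef
  set D : ℕ := B.natDegree with hDdef
  set d : ℕ → ℂ := fun u => if u ≤ D+1 then B.coeff (D+1-u) else e (u-(D+2)) with hddef
  set Md : ℝ := (∑ j ∈ Finset.range (D+2), ‖B.coeff j‖) + (CP * C + C'') with hMddef
  have hMd0 : 0 ≤ Md := by
    apply add_nonneg (Finset.sum_nonneg fun j _ => norm_nonneg _) (by positivity)
  have hd : ∀ u, ‖d u‖ ≤ Md * r ^ u := by
    intro u
    rw [hddef]
    simp only
    split_ifs with hu
    · calc ‖B.coeff (D+1-u)‖ ≤ ∑ j ∈ Finset.range (D+2), ‖B.coeff j‖ := by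
            apply Finset.single_le_sum (fun j _ => norm_nonneg _)
            exact Finset.mem_range.mpr (by omega)
        _ ≤ Md := by rw [hMddef]; nlinarith
        _ ≤ Md * r ^ u := le_mul_of_one_le_right hMd0 (one_le_pow₀ hr1)
    · calc ‖e (u-(D+2))‖ ≤ (CP * C + C'') * r ^ (u-(D+2)) := he _
        _ ≤ Md * r ^ (u-(D+2)) := by
            apply mul_le_mul_of_nonneg_right _ (by positivity)
            rw [hMddef]
            have : 0 ≤ ∑ j ∈ Finset.range (D+2), ‖B.coeff j‖ :=
              Finset.sum_nonneg fun j _ => norm_nonneg _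
            linarith
        _ ≤ Md * r ^ u :=
            mul_le_mul_of_nonneg_left (pow_le_pow_right₀ hr1 (Nat.sub_le u (D+2))) hMd0
  -- main identity
  have hmain : ∀ z : ℝ, 0 < z → z < 1/r → ∑' u, d u * (z:ℂ) ^ u = 0 := by
    intro z hz hz1
    have hzr : r * z < 1 := by
      rw [lt_div_iff₀ hr0] at hz1; linarith [mul_comm r z]
    set ζ : ℂ := ((z:ℂ))⁻¹ with hζdef
    have hzC : (z:ℂ) ≠ 0 := by exact_mod_cast hz.ne'
    have hζ0 : ζ ≠ 0 := inv_ne_zero hzC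
    have hζz : ζ * (z:ℂ) = 1 := by rw [hζdef]; field_simp
    have habsζ : ‖ζ‖ = z⁻¹ := by
      rw [hζdef, norm_inv, Complex.norm_real, Real.norm_eq_abs, _root_.abs_of_nonneg hz.le]
    have hrabs : r < ‖ζ‖ := by
      rw [habsζ, lt_inv_comm₀ hr0 hz]
      rw [lt_div_iff₀ hr0] at hz1
      calc z < 1/r := by rw [lt_div_iff₀ hr0]; linarith
        _ = r⁻¹ := one_div r
    have hdiv : ∀ (a : ℂ) (k : ℕ), a / ζ ^ k = a * (z:ℂ) ^ k := by
      intro a k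
      rw [hζdef, div_eq_mul_inv, ← inv_pow, inv_inv]
    have HA := hAsym ζ (lt_of_le_of_lt hRr hrabs)
      (lt_of_le_of_lt (max_le ((le_abs_self R').trans hR'r) hRr) hrabs)
    rw [tsum_congr (fun l => hdiv (f l) (l+1)),
        tsum_congr (fun l => hdiv (c l) (n+l+1))] at HA
    -- summability
    have hsum_f : Summable (fun l => f l * (z:ℂ) ^ (l+1)) :=
      summable_geom_bound' f C r hf' z hz.le hr0.le hzr
    have hsum_fk : ∀ k : ℕ, Summable (fun m => f (m+k) * (z:ℂ) ^ (m+1)) := by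
      intro k
      apply summable_geom_bound' (fun m => f (m+k)) (C * r^k) r _ z hz.le hr0.le hzr
      intro m
      calc ‖f (m+k)‖ ≤ C * r ^ (m+k) := hf' _
        _ = C * r^k * r^m := by rw [pow_add]; ring
    have hsum_S : Summable (fun m => S m * (z:ℂ) ^ (m+1)) :=
      summable_geom_bound' S (CP*C) r hS z hz.le hr0.le hzr
    have hsum_ite : Summable (fun m => (if n ≤ m then c (m-n) else 0) * (z:ℂ) ^ (m+1)) := by
      apply summable_geom_bound' _ C'' r _ z hz.le hr0.le hzr
      intro m
      split_ifs with hnm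
      · exact (hc' _).trans
          (mul_le_mul_of_nonneg_left (pow_le_pow_right₀ hr1 (Nat.sub_le m n)) hC''0)
      · rw [norm_zero]; positivity
    have hsum_e : Summable (fun m => e m * (z:ℂ) ^ (m+1)) :=
      summable_geom_bound' e (CP*C+C'') r he z hz.le hr0.le hzr
    -- step 1 : per-k expansion
    have hk : ∀ k : ℕ, ζ ^ k * ∑' l, f l * (z:ℂ) ^ (l+1)
        = (∑ i ∈ Finset.range k, f i * ζ ^ (k-1-i)) + ∑' m, f (m+k) * (z:ℂ) ^ (m+1) := by
      intro k
      have h1 : ζ ^ k * ∑' l, f l * (z:ℂ) ^ (l+1)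
          = ∑' l, ζ ^ k * (f l * (z:ℂ) ^ (l+1)) := tsum_mul_left.symm
      have h2 := (hsum_f.mul_left (ζ ^ k)).sum_add_tsum_nat_add k
      rw [h1, ← h2]
      congr 1
      · apply Finset.sum_congr rfl
        intro i hi
        have hik : i < k := Finset.mem_range.mp hi
        have hζk : ζ ^ k = ζ ^ (k-1-i) * ζ ^ (i+1) := by
          rw [← pow_add]; congr 1; omega
        rw [hζk]
        have : ζ ^ (i+1) * (z:ℂ) ^ (i+1) = 1 := by rw [← mul_pow, hζz, one_pow]
        calc ζ ^ (k-1-i) * ζ ^ (i+1) * (f i * (z:ℂ) ^ (i+1))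
            = f i * ζ ^ (k-1-i) * (ζ ^ (i+1) * (z:ℂ) ^ (i+1)) := by ring
          _ = f i * ζ ^ (k-1-i) := by rw [this, mul_one]
      · apply tsum_congr
        intro m
        have hzk : ζ ^ k * (z:ℂ) ^ k = 1 := by rw [← mul_pow, hζz, one_pow]
        have hp : (z:ℂ) ^ (m+k+1) = (z:ℂ) ^ (m+1) * (z:ℂ) ^ k := by
          rw [← pow_add]; congr 1; omega
        calc ζ ^ k * (f (m+k) * (z:ℂ) ^ (m+k+1))
            = f (m+k) * (z:ℂ) ^ (m+1) * (ζ ^ k * (z:ℂ) ^ k) := by rw [hp]; ring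
          _ = f (m+k) * (z:ℂ) ^ (m+1) := by rw [hzk, mul_one]
    -- step 2
    have hA : Polynomial.eval ζ A
        = ∑ k ∈ Finset.range (n+1), P.coeff k * ∑ i ∈ Finset.range k, f i * ζ ^ (k-1-i) := by
      rw [hAdef]
      rw [Polynomial.eval_finset_sum]
      apply Finset.sum_congr rfl
      intro k _
      rw [Polynomial.eval_mul, Polynomial.eval_C, Polynomial.eval_finset_sum]
      congr 1
      apply Finset.sum_congr rfl
      intro i _
      rw [Polynomial.eval_mul, Polynomial.eval_C, Polynomial.eval_pow, Polynomial.eval_X]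
    have HA2 : Polynomial.eval ζ P * ∑' l, f l * (z:ℂ) ^ (l+1)
        = Polynomial.eval ζ A + ∑' m, S m * (z:ℂ) ^ (m+1) := by
      rw [Polynomial.eval_eq_sum_range' (show P.natDegree < n+1 by omega) ζ, Finset.sum_mul]
      have : ∀ k ∈ Finset.range (n+1), P.coeff k * ζ ^ k * (∑' l, f l * (z:ℂ) ^ (l+1))
          = P.coeff k * (∑ i ∈ Finset.range k, f i * ζ ^ (k-1-i))
            + P.coeff k * (∑' m, f (m+k) * (z:ℂ) ^ (m+1)) := by
        intro k _
        rw [mul_assoc, hk k, mul_add]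
      rw [Finset.sum_congr rfl this, Finset.sum_add_distrib, hA]
      congr 1
      calc ∑ k ∈ Finset.range (n+1), P.coeff k * (∑' m, f (m+k) * (z:ℂ) ^ (m+1))
          = ∑ k ∈ Finset.range (n+1), ∑' m, P.coeff k * (f (m+k) * (z:ℂ) ^ (m+1)) := by
            exact Finset.sum_congr rfl (fun k _ => tsum_mul_left.symm)
        _ = ∑' m, ∑ k ∈ Finset.range (n+1), P.coeff k * (f (m+k) * (z:ℂ) ^ (m+1)) :=
            (Summable.tsum_finsetSum (fun k _ => (hsum_fk k).mul_left (P.coeff k))).symm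
        _ = ∑' m, S m * (z:ℂ) ^ (m+1) := by
            apply tsum_congr
            intro m
            rw [hSdef]
            simp only
            rw [Finset.sum_mul]
            exact Finset.sum_congr rfl (fun k _ => by ring)
    -- step 3
    have hcite : ∑' m, (if n ≤ m then c (m-n) else 0) * (z:ℂ) ^ (m+1)
        = ∑' l, c l * (z:ℂ) ^ (n+l+1) := by
      have h2 := hsum_ite.sum_add_tsum_nat_add n
      have h3 : ∑ i ∈ Finset.range n, (if n ≤ i then c (i-n) else 0) * (z:ℂ) ^ (i+1) = 0 := by
        apply Finset.sum_eq_zero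
        intro i hi
        have hi' := Finset.mem_range.mp hi
        rw [if_neg (by omega), zero_mul]
      rw [← h2, h3, zero_add]
      apply tsum_congr
      intro l
      rw [if_pos (by omega), Nat.add_sub_cancel, show l+n+1 = n+l+1 from by omega]
    have step3 : Polynomial.eval ζ B + ∑' m, e m * (z:ℂ) ^ (m+1) = 0 := by
      have hesplit : ∑' m, e m * (z:ℂ) ^ (m+1)
          = (∑' m, S m * (z:ℂ) ^ (m+1)) - ∑' l, c l * (z:ℂ) ^ (n+l+1) := by
        rw [← hcite, ← Summable.tsum_sub hsum_S hsum_ite]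
        apply tsum_congr
        intro m
        rw [hedef]
        simp only
        ring
      rw [hBdef, Polynomial.eval_sub, hesplit]
      linear_combination HA - HA2
    -- step 4
    have hsum_d : Summable (fun u => d u * (z:ℂ) ^ u) :=
      summable_geom_bound d Md r hd z hz.le hr0.le hzr
    have hsplit := hsum_d.sum_add_tsum_nat_add (D+2)
    have htail : ∑' v, d (v+(D+2)) * (z:ℂ) ^ (v+(D+2))
        = (z:ℂ) ^ (D+1) * ∑' v, e v * (z:ℂ) ^ (v+1) := by
      rw [← tsum_mul_left]
      apply tsum_congr
      intro v
      rw [hddef]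
      simp only
      rw [if_neg (by omega)]
      have h4 : v+(D+2)-(D+2) = v := by omega
      rw [h4]
      have h5 : (z:ℂ) ^ (v+(D+2)) = (z:ℂ) ^ (D+1) * (z:ℂ) ^ (v+1) := by
        rw [← pow_add]; congr 1; omega
      rw [h5]; ring
    have hhead : ∑ u ∈ Finset.range (D+2), d u * (z:ℂ) ^ u
        = (z:ℂ) ^ (D+1) * Polynomial.eval ζ B := by
      have h6 : ∀ u ∈ Finset.range (D+2), d u * (z:ℂ) ^ u
          = (fun j => B.coeff j * (z:ℂ) ^ (D+1-j)) ((D+2)-1-u) := by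
        intro u hu
        have hu' := Finset.mem_range.mp hu
        have huD : u ≤ D+1 := by omega
        simp only
        have e1 : (D+2)-1-u = D+1-u := by omega
        have e2 : D+1-(D+1-u) = u := by omega
        rw [e1, e2, hddef]
        simp only
        rw [if_pos huD]
      rw [Finset.sum_congr rfl h6, Finset.sum_range_reflect (fun j => B.coeff j * (z:ℂ) ^ (D+1-j)) (D+2)]
      rw [Polynomial.eval_eq_sum_range' (show B.natDegree < D+2 by omega) ζ, Finset.mul_sum]
      apply Finset.sum_congr rfl
      intro j hj
      have hjD : j ≤ D+1 := by have := Finset.mem_range.mp hj; omega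
      have h7 : (z:ℂ) ^ (D+1) = (z:ℂ) ^ (D+1-j) * (z:ℂ) ^ j := by
        rw [← pow_add]; congr 1; omega
      have h8 : ζ ^ j * (z:ℂ) ^ j = 1 := by rw [← mul_pow, hζz, one_pow]
      calc B.coeff j * (z:ℂ) ^ (D+1-j)
          = (z:ℂ) ^ (D+1-j) * (ζ ^ j * (z:ℂ) ^ j) * B.coeff j := by rw [h8]; ring
        _ = (z:ℂ) ^ (D+1) * (B.coeff j * ζ ^ j) := by rw [h7]; ring
    rw [← hsplit, hhead, htail, ← mul_add, step3, mul_zero]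
  have hd0 := coeffs_eq_zero d Md r hMd0 hr0.le hd (1/r) (by positivity) hmain
  -- extract S j = 0 for j < n
  have hS0 : ∀ j, j < n → S j = 0 := by
    intro j hj
    have := hd0 (D+2+j)
    rw [hddef] at this
    simp only at this
    rw [if_neg (by omega)] at this
    have h2 : D+2+j-(D+2) = j := by omega
    rw [h2, hedef] at this
    simp only at this
    rw [if_neg (by omega)] at this
    simpa using this
  -- linear algebra
  by_contra hne
  have hlt : P.natDegree < n := lt_of_le_of_ne hdegP hne
  have hPn : P.coeff n = 0 := Polynomial.coeff_eq_zero_of_natDegree_lt hlt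
  set v : Fin n → ℂ := fun k => P.coeff k.val with hvdef
  have hmv : Matrix.mulVec (fun i j : Fin n => f (i.val + j.val)) v = 0 := by
    funext i
    have hSi : S i.val = 0 := hS0 i.val i.isLt
    rw [hSdef] at hSi
    simp only at hSi
    rw [Finset.sum_range_succ, hPn, zero_mul, add_zero] at hSi
    rw [← Fin.sum_univ_eq_sum_range (fun k => P.coeff k * f (i.val + k)) n] at hSi
    simp only [Matrix.mulVec, dotProduct, Pi.zero_apply]
    rw [← hSi]
    apply Finset.sum_congr rfl
    intro k _
    simp only [hvdef]
    ring
  have hv0 : v = 0 := Matrix.eq_zero_of_mulVec_eq_zero hHankel hmv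
  apply hP
  ext k
  rw [Polynomial.coeff_zero]
  rcases lt_trichotomy k n with hk | hk | hk
  · have := congrFun hv0 ⟨k, hk⟩
    simpa [hvdef] using this
  · rw [hk]; exact hPn
  · exact Polynomial.coeff_eq_zero_of_natDegree_lt (lt_of_le_of_lt hdegP hk)
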